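/- Let n = m·k and let {1, …, n} = Δ_1 ∪ … ∪ Δ_m be a partition into m pairwise disjoint blocks each of cardinality k ≥ 1; let I ⊆ {1, …, n}, ρ = |I|/n, δ > 0, and let π be a uniformly random permutation of {1, …, n}. Set μ = P[ |π(I) ∩ Δ_1| > (ρ+δ)·k ]. Then for all integers t, s with 1 ≤ t ≤ s ≤ m: P[ |{ j : |π(I) ∩ Δ_j| > (ρ+δ)·k }| ≥ s ] · C(s, t) ≤ C(m, t) · μ^t; and the analogous bound holds with the events |π(I) ∩ Δ_j| < (ρ−δ)·k and μ' = P[ |π(I) ∩ Δ_1| < (ρ−δ)·k ]. -/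

import Mathlib

set_option linter.unusedSectionVars false
set_option maxHeartbeats 1000000
open scoped Classical
open Finset

variable {α : Type*} [Fintype α] [DecidableEq α]

private lemma step_incr (W : Finset α) (E : Finset α → Prop) [DecidablePred E]
    (hE : ∀ ⦃A B : Finset α⦄, A ⊆ B → E A → E B) (c : ℕ) :
    #((W.powersetCard c).filter E) * (#W - c)
      ≤ #((W.powersetCard (c+1)).filter E) * (c+1) := by
  refine Finset.card_mul_le_card_mul (fun B B' => B ⊆ B') ?_ ?_
  · intro B hB
    rw [mem_filter, mem_powersetCard] at hB
    obtain ⟨⟨hBW, hBc⟩, hEB⟩ := hB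
    have hWB : #(W \ B) = #W - c := by rw [card_sdiff_of_subset hBW, hBc]
    calc #W - c = #(W \ B) := hWB.symm
      _ ≤ #(((W.powersetCard (c+1)).filter E).bipartiteAbove (fun B B' => B ⊆ B') B) := by
          refine card_le_card_of_injOn (fun v => insert v B) ?_ ?_
          · intro v hv
            rw [mem_coe, mem_sdiff] at hv
            rw [mem_coe, mem_bipartiteAbove]
            refine ⟨mem_filter.2 ⟨mem_powersetCard.2 ⟨insert_subset hv.1 hBW, ?_⟩,
              hE (subset_insert _ _) hEB⟩, subset_insert _ _⟩
            rw [card_insert_of_notMem hv.2, hBc]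
          · intro v hv v' hv' hvv'
            simp only [mem_coe, mem_sdiff] at hv hv'
            simp only at hvv'
            have : v ∈ insert v' B := hvv' ▸ mem_insert_self v B
            rcases mem_insert.1 this with h | h
            · exact h
            · exact absurd h hv.2
  · intro B' hB'
    rw [mem_filter, mem_powersetCard] at hB'
    calc #((((W.powersetCard c).filter E)).bipartiteBelow (fun B B' => B ⊆ B') B')
        ≤ #(B'.powersetCard c) := by
          refine card_le_card ?_
          intro B hB
          rw [mem_bipartiteBelow, mem_filter, mem_powersetCard] at hB
          exact mem_powersetCard.2 ⟨hB.2, hB.1.1.2⟩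
      _ = c + 1 := by rw [card_powersetCard, hB'.1.2, Nat.choose_succ_self_right]

private lemma ratio_mono (W : Finset α) (E : Finset α → Prop) [DecidablePred E]
    (hE : ∀ ⦃A B : Finset α⦄, A ⊆ B → E A → E B) {c1 c2 : ℕ}
    (h12 : c1 ≤ c2) (h2 : c2 ≤ #W) :
    #((W.powersetCard c1).filter E) * (#W).choose c2
      ≤ #((W.powersetCard c2).filter E) * (#W).choose c1 := by
  revert h2
  induction c2, h12 using Nat.le_induction with
  | base => intro _; exact le_rfl
  | succ c2 h12 ih =>
    intro h2
    have ih' := ih (by omega)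
    have key := step_incr W E hE c2
    have idc : (#W).choose (c2+1) * (c2+1) = (#W).choose c2 * (#W - c2) :=
      Nat.choose_succ_right_eq _ _
    refine Nat.le_of_mul_le_mul_right ?_ (Nat.succ_pos c2)
    calc #((W.powersetCard c1).filter E) * (#W).choose (c2+1) * (c2+1)
        = #((W.powersetCard c1).filter E) * ((#W).choose c2 * (#W - c2)) := by
          rw [mul_assoc, idc]
      _ = #((W.powersetCard c1).filter E) * (#W).choose c2 * (#W - c2) := by ring
      _ ≤ #((W.powersetCard c2).filter E) * (#W).choose c1 * (#W - c2) :=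
          Nat.mul_le_mul_right _ ih'
      _ = #((W.powersetCard c2).filter E) * (#W - c2) * (#W).choose c1 := by ring
      _ ≤ #((W.powersetCard (c2+1)).filter E) * (c2+1) * (#W).choose c1 :=
          Nat.mul_le_mul_right _ key
      _ = #((W.powersetCard (c2+1)).filter E) * (#W).choose c1 * (c2+1) := by ring

private lemma sdiff_inter_of_disjoint {U D : Finset α} (h : Disjoint U D) (S : Finset α) :
    (S \ U) ∩ D = S ∩ D := by
  ext a
  simp only [mem_inter, mem_sdiff]
  constructor
  · rintro ⟨⟨h1, -⟩, h2⟩; exact ⟨h1, h2⟩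
  · rintro ⟨h1, h2⟩; exact ⟨⟨h1, fun hU => (Finset.disjoint_left.1 h) hU h2⟩, h2⟩

private lemma union_parts {U A B : Finset α} (hA : A ⊆ U) (hB : B ⊆ Finset.univ \ U) :
    (A ∪ B) ∩ U = A ∧ (A ∪ B) \ U = B := by
  have hBU : ∀ a ∈ B, a ∉ U := by
    intro a ha
    have := hB ha
    rw [mem_sdiff] at this
    exact this.2
  constructor
  · ext a
    simp only [mem_inter, mem_union]
    constructor
    · rintro ⟨h | h, hU⟩
      · exact h
      · exact absurd hU (hBU a h)
    · intro h; exact ⟨Or.inl h, hA h⟩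
  · ext a
    simp only [mem_sdiff, mem_union]
    constructor
    · rintro ⟨h | h, hU⟩
      · exact absurd (hA h) hU
      · exact h
    · intro h; exact ⟨Or.inr h, hBU a h⟩

private lemma decomp (r : ℕ) (U : Finset α) (p : ℕ → Prop) (E : Finset α → Prop)
    [DecidablePred E] (P : Finset α → Prop) [DecidablePred P]
    (hP : ∀ S : Finset α, P S ↔ (p (#(S ∩ U)) ∧ E (S \ U))) :
    #((Finset.univ.powersetCard r).filter P)
      = ∑ x ∈ (Finset.range (r+1)).filter p,
          (#U).choose x * #(((Finset.univ \ U).powersetCard (r - x)).filter E) := by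
  rw [Finset.filter_congr (fun S _ => hP S)]
  rw [Finset.card_eq_sum_card_fiberwise (f := fun S : Finset α => #(S ∩ U))
      (t := (Finset.range (r+1)).filter p) ?memb]
  case memb =>
    intro S hS
    rw [mem_coe, mem_filter, mem_powersetCard] at hS
    rw [mem_coe, mem_filter, mem_range]
    have h1 : #(S ∩ U) ≤ #S := card_le_card inter_subset_left
    simp only
    exact ⟨by omega, hS.2.1⟩
  refine Finset.sum_congr rfl fun x hx => ?_
  rw [mem_filter, mem_range] at hx
  have hx1 : x ≤ r := by omega
  rw [← card_powersetCard x U, ← Finset.card_product]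
  refine Finset.card_bij' (fun S _ => (S ∩ U, S \ U)) (fun q _ => q.1 ∪ q.2) ?_ ?_ ?_ ?_
  · intro S hS
    simp only [mem_filter, mem_powersetCard, mem_univ] at hS
    obtain ⟨⟨⟨-, hSr⟩, hp, hES⟩, hSx⟩ := hS
    simp only [mem_product, mem_filter, mem_powersetCard]
    have hcd := Finset.card_inter_add_card_sdiff S U
    refine ⟨⟨inter_subset_right, hSx⟩, ⟨sdiff_subset_sdiff (subset_univ S) le_rfl, by omega⟩, hES⟩
  · intro q hq
    simp only [mem_product, mem_filter, mem_powersetCard] at hq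
    obtain ⟨⟨hq1U, hq1x⟩, ⟨hq2W, hq2c⟩, hq2E⟩ := hq
    obtain ⟨h1, h2⟩ := union_parts hq1U hq2W
    have hdisj : Disjoint q.1 q.2 := by
      refine Finset.disjoint_left.2 fun a ha ha2 => ?_
      have := hq2W ha2
      rw [mem_sdiff] at this
      exact this.2 (hq1U ha)
    simp only [mem_filter, mem_powersetCard, mem_univ]
    rw [h1, h2]
    refine ⟨⟨⟨subset_univ _, ?_⟩, hq1x ▸ hx.2, hq2E⟩, hq1x⟩
    rw [card_union_of_disjoint hdisj, hq1x, hq2c]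
    omega
  · intro S hS
    simp only [mem_filter, mem_powersetCard, mem_univ] at hS
    simp only
    ext a
    simp only [mem_union, mem_inter, mem_sdiff]
    by_cases hU : a ∈ U <;> simp [hU] <;> tauto
  · intro q hq
    simp only [mem_product, mem_filter, mem_powersetCard] at hq
    obtain ⟨⟨hq1U, hq1x⟩, ⟨hq2W, hq2c⟩, hq2E⟩ := hq
    obtain ⟨h1, h2⟩ := union_parts hq1U hq2W
    simp only [h1, h2]
/-- Number of `r`-subsets `S` of the universe such that every block indexed by `T`
meets `S` in more than `c` elements. -/
noncomputable def cntA {α : Type*} [Fintype α] [DecidableEq α] (r : ℕ) {ι : Type*}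
    (T : Finset ι) (Δ : ι → Finset α) (c : ℝ) : ℕ :=
  #((Finset.univ.powersetCard r).filter (fun S : Finset α => ∀ j ∈ T, c < (#(S ∩ Δ j) : ℝ)))

private lemma cntA_single (r : ℕ) {ι : Type*} (Δ : ι → Finset α) (c : ℝ) (j : ι) :
    cntA r ({j} : Finset ι) Δ c
      = ∑ x ∈ (Finset.range (r+1)).filter (fun x : ℕ => c < (x : ℝ)),
          (#(Δ j)).choose x * (Fintype.card α - #(Δ j)).choose (r - x) := by
  unfold cntA
  rw [decomp r (Δ j) (fun x : ℕ => c < (x : ℝ)) (fun _ : Finset α => True) _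
    (fun S => by simp)]
  refine Finset.sum_congr rfl fun x hx => ?_
  rw [Finset.filter_true, card_powersetCard, Finset.card_univ_diff]

private lemma cntA_insert (r : ℕ) {ι : Type*} [DecidableEq ι] (Δ : ι → Finset α) (c : ℝ) (j : ι)
    (T' : Finset ι) (hdis : ∀ i ∈ T', Disjoint (Δ j) (Δ i)) :
    cntA r (insert j T') Δ c
      = ∑ x ∈ (Finset.range (r+1)).filter (fun x : ℕ => c < (x : ℝ)),
          (#(Δ j)).choose x *
            #(((Finset.univ \ Δ j).powersetCard (r - x)).filter
              (fun B : Finset α => ∀ i ∈ T', c < (#(B ∩ Δ i) : ℝ))) := by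
  unfold cntA
  rw [decomp r (Δ j) (fun x : ℕ => c < (x : ℝ))
    (fun B : Finset α => ∀ i ∈ T', c < (#(B ∩ Δ i) : ℝ)) _ ?hiff]
  case hiff =>
    intro S
    simp only [Finset.forall_mem_insert]
    constructor
    · rintro ⟨h1, h2⟩
      exact ⟨h1, fun i hi => by rw [sdiff_inter_of_disjoint (hdis i hi)]; exact h2 i hi⟩
    · rintro ⟨h1, h2⟩
      exact ⟨h1, fun i hi => by rw [← sdiff_inter_of_disjoint (hdis i hi)]; exact h2 i hi⟩

private lemma cntA_noj (r : ℕ) {ι : Type*} [DecidableEq ι] (Δ : ι → Finset α) (c : ℝ) (j : ι)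
    (T' : Finset ι) (hdis : ∀ i ∈ T', Disjoint (Δ j) (Δ i)) :
    cntA r T' Δ c
      = ∑ x ∈ Finset.range (r+1),
          (#(Δ j)).choose x *
            #(((Finset.univ \ Δ j).powersetCard (r - x)).filter
              (fun B : Finset α => ∀ i ∈ T', c < (#(B ∩ Δ i) : ℝ))) := by
  unfold cntA
  rw [decomp r (Δ j) (fun _ : ℕ => True)
    (fun B : Finset α => ∀ i ∈ T', c < (#(B ∩ Δ i) : ℝ)) _ ?hiff]
  case hiff =>
    intro S
    simp only [true_and]
    constructor
    · intro h2
      exact fun i hi => by rw [sdiff_inter_of_disjoint (hdis i hi)]; exact h2 i hi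
    · intro h2
      exact fun i hi => by rw [← sdiff_inter_of_disjoint (hdis i hi)]; exact h2 i hi
  rw [Finset.filter_true]

private lemma cntA_empty (r : ℕ) {ι : Type*} (Δ : ι → Finset α) (c : ℝ) :
    cntA r (∅ : Finset ι) Δ c = (Fintype.card α).choose r := by
  unfold cntA
  rw [Finset.filter_true_of_mem (fun S _ => by simp), card_powersetCard, card_univ]

private lemma choose_decomp (r : ℕ) (U : Finset α) :
    (Fintype.card α).choose r
      = ∑ x ∈ Finset.range (r+1),
          (#U).choose x * (Fintype.card α - #U).choose (r - x) := by
  have h2 := decomp (α := α) r U (fun _ : ℕ => True) (fun _ : Finset α => True)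
    (fun _ : Finset α => True) (fun S => by simp)
  rw [Finset.filter_true_of_mem (fun S _ => trivial), card_powersetCard, card_univ] at h2
  rw [h2, Finset.filter_true]
  refine Finset.sum_congr rfl fun x hx => ?_
  rw [Finset.filter_true, card_powersetCard, Finset.card_univ_diff]
private lemma corr (r : ℕ) {ι : Type*} [DecidableEq ι] (Δ : ι → Finset α) (c : ℝ) (j : ι)
    (T' : Finset ι) (hdis : ∀ i ∈ T', Disjoint (Δ j) (Δ i)) :
    cntA r (insert j T') Δ c * (Fintype.card α).choose r
      ≤ cntA r ({j} : Finset ι) Δ c * cntA r T' Δ c := by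
  rw [cntA_insert r Δ c j T' hdis, cntA_noj r Δ c j T' hdis, cntA_single r Δ c j,
    choose_decomp r (Δ j)]
  set W : Finset α := Finset.univ \ Δ j with hW
  have hWc : #W = Fintype.card α - #(Δ j) := Finset.card_univ_diff _
  set u : ℕ → ℕ := fun x => (#(Δ j)).choose x with hu
  set g : ℕ → ℕ := fun y => #((W.powersetCard y).filter
      (fun B : Finset α => ∀ i ∈ T', c < (#(B ∩ Δ i) : ℝ))) with hg
  set h : ℕ → ℕ := fun y => (Fintype.card α - #(Δ j)).choose y with hh
  -- termwise key inequality
  have key : ∀ x ∈ (Finset.range (r+1)).filter (fun x : ℕ => c < (x : ℝ)),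
      ∀ y ∈ (Finset.range (r+1)).filter (fun x : ℕ => ¬ c < (x : ℝ)),
      g (r - x) * h (r - y) ≤ h (r - x) * g (r - y) := by
    intro x hx y hy
    rw [Finset.mem_filter, Finset.mem_range] at hx hy
    have hyx : y < x := by
      have h1 : (y : ℝ) ≤ c := not_lt.mp hy.2
      have h2 : (y : ℝ) < (x : ℝ) := lt_of_le_of_lt h1 hx.2
      exact_mod_cast h2
    have hle : r - x ≤ r - y := by omega
    by_cases hyW : r - y ≤ #W
    · have := ratio_mono W (fun B : Finset α => ∀ i ∈ T', c < (#(B ∩ Δ i) : ℝ))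
        (fun A B hAB hA i hi => lt_of_lt_of_le (hA i hi)
          (by exact_mod_cast Finset.card_le_card (Finset.inter_subset_inter hAB le_rfl)))
        hle hyW
      rw [hWc] at this
      simpa only [hg, hh, Nat.mul_comm] using this
    · have : h (r - y) = 0 := by
        rw [hh]
        simp only
        rw [← hWc]
        exact Nat.choose_eq_zero_of_lt (by omega)
      rw [this, Nat.mul_zero]
      exact Nat.zero_le _
  -- split the full-range sums
  rw [← Finset.sum_filter_add_sum_filter_not (Finset.range (r+1)) (fun x : ℕ => c < (x : ℝ))
      (fun x => u x * h (r - x)),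
    ← Finset.sum_filter_add_sum_filter_not (Finset.range (r+1)) (fun x : ℕ => c < (x : ℝ))
      (fun x => u x * g (r - x))]
  set hi := (Finset.range (r+1)).filter (fun x : ℕ => c < (x : ℝ)) with hhi
  set lo := (Finset.range (r+1)).filter (fun x : ℕ => ¬ c < (x : ℝ)) with hlo
  rw [Nat.mul_add, Nat.mul_add]
  refine Nat.add_le_add (le_of_eq (Nat.mul_comm _ _)) ?_
  rw [Finset.sum_mul_sum, Finset.sum_mul_sum]
  refine Finset.sum_le_sum fun x hx => Finset.sum_le_sum fun y hy => ?_
  calc u x * g (r - x) * (u y * h (r - y))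
      = u x * u y * (g (r - x) * h (r - y)) := by ring
    _ ≤ u x * u y * (h (r - x) * g (r - y)) := Nat.mul_le_mul_left _ (key x hx y hy)
    _ = u x * h (r - x) * (u y * g (r - y)) := by ring
private lemma main_sets (r : ℕ) {ι : Type*} [DecidableEq ι] (Δ : ι → Finset α) (c : ℝ)
    (T : Finset ι) (hdis : ∀ i ∈ T, ∀ j ∈ T, i ≠ j → Disjoint (Δ i) (Δ j)) :
    cntA r T Δ c * ((Fintype.card α).choose r) ^ T.card
      ≤ (Fintype.card α).choose r * ∏ j ∈ T, cntA r ({j} : Finset ι) Δ c := by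
  induction T using Finset.induction_on with
  | empty => simp [cntA_empty]
  | @insert j T' hj ih =>
    have hdis' : ∀ i ∈ T', ∀ j ∈ T', i ≠ j → Disjoint (Δ i) (Δ j) := fun i hi j' hj' hne =>
      hdis i (Finset.mem_insert_of_mem hi) j' (Finset.mem_insert_of_mem hj') hne
    have hdisj : ∀ i ∈ T', Disjoint (Δ j) (Δ i) := fun i hi =>
      hdis j (Finset.mem_insert_self j T') i (Finset.mem_insert_of_mem hi)
        (fun hji => hj (hji ▸ hi))
    have hco := corr r Δ c j T' hdisj
    have ih' := ih hdis'
    rw [Finset.card_insert_of_notMem hj, Finset.prod_insert hj]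
    calc cntA r (insert j T') Δ c * ((Fintype.card α).choose r) ^ (T'.card + 1)
        = (cntA r (insert j T') Δ c * (Fintype.card α).choose r)
            * ((Fintype.card α).choose r) ^ T'.card := by ring
      _ ≤ (cntA r ({j} : Finset ι) Δ c * cntA r T' Δ c)
            * ((Fintype.card α).choose r) ^ T'.card := Nat.mul_le_mul_right _ hco
      _ = cntA r ({j} : Finset ι) Δ c
            * (cntA r T' Δ c * ((Fintype.card α).choose r) ^ T'.card) := by ring
      _ ≤ cntA r ({j} : Finset ι) Δ c
            * ((Fintype.card α).choose r * ∏ i ∈ T', cntA r ({i} : Finset ι) Δ c) :=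
          Nat.mul_le_mul_left _ ih'
      _ = (Fintype.card α).choose r
            * (cntA r ({j} : Finset ι) Δ c * ∏ i ∈ T', cntA r ({i} : Finset ι) Δ c) := by ring

private lemma cnt_compl (r : ℕ) {ι : Type*} (T : Finset ι) (Δ : ι → Finset α) (k : ℕ) (b : ℝ)
    (hc : ∀ j ∈ T, #(Δ j) = k) (hr : r ≤ Fintype.card α) :
    #((Finset.univ.powersetCard r).filter
        (fun S : Finset α => ∀ j ∈ T, (#(S ∩ Δ j) : ℝ) < b))
      = cntA (Fintype.card α - r) T Δ ((k : ℝ) - b) := by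
  unfold cntA
  have hsplit : ∀ (S : Finset α) (j : ι), j ∈ T →
      #(S ∩ Δ j) + #((Finset.univ \ S) ∩ Δ j) = k := by
    intro S j hj
    have h1 : (Finset.univ \ S) ∩ Δ j = Δ j \ S := by
      ext a
      simp [Finset.mem_sdiff, Finset.mem_inter, and_comm]
    rw [h1, Finset.inter_comm]
    rw [← hc j hj]
    rw [Nat.add_comm]
    exact Finset.card_sdiff_add_card_inter _ _
  refine Finset.card_bij' (fun S _ => Finset.univ \ S) (fun S _ => Finset.univ \ S) ?_ ?_ ?_ ?_
  · intro S hS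
    simp only [Finset.mem_filter, Finset.mem_powersetCard] at hS ⊢
    obtain ⟨⟨hSu, hSr⟩, hSb⟩ := hS
    refine ⟨⟨Finset.sdiff_subset, by rw [Finset.card_univ_diff, hSr]⟩, ?_⟩
    intro j hj
    have := hsplit S j hj
    have hb := hSb j hj
    have : (#((Finset.univ \ S) ∩ Δ j) : ℝ) = (k : ℝ) - (#(S ∩ Δ j) : ℝ) := by
      have := hsplit S j hj
      push_cast [← this]
      ring
    rw [this]
    linarith
  · intro S hS
    simp only [Finset.mem_filter, Finset.mem_powersetCard] at hS ⊢
    obtain ⟨⟨hSu, hSr⟩, hSb⟩ := hS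
    refine ⟨⟨Finset.sdiff_subset, by rw [Finset.card_univ_diff, hSr]; omega⟩, ?_⟩
    intro j hj
    have hb := hSb j hj
    have hsp := hsplit (Finset.univ \ S) j hj
    have h2 : Finset.univ \ (Finset.univ \ S) = S :=
      Finset.sdiff_sdiff_eq_self hSu
    rw [h2] at hsp
    have hcast : (#((Finset.univ \ S) ∩ Δ j) : ℝ) + (#(S ∩ Δ j) : ℝ) = (k : ℝ) := by
      exact_mod_cast congrArg (fun z : ℕ => (z : ℝ)) hsp
    linarith
  · intro S hS
    simp only [Finset.mem_filter, Finset.mem_powersetCard] at hS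
    exact Finset.sdiff_sdiff_eq_self hS.1.1
  · intro S hS
    simp only [Finset.mem_filter, Finset.mem_powersetCard] at hS
    exact Finset.sdiff_sdiff_eq_self hS.1.1
private lemma exists_perm_image (S S' : Finset α) (h : #S = #S') :
    ∃ σ : Equiv.Perm α, S.image σ = S' := by
  have h2 : #(Finset.univ \ S) = #(Finset.univ \ S') := by
    rw [Finset.card_univ_diff, Finset.card_univ_diff, h]
  have e1 : {x // x ∈ S} ≃ {x // x ∈ S'} := Finset.equivOfCardEq h
  have e2 : {x // ¬ x ∈ S} ≃ {x // ¬ x ∈ S'} := by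
    refine (Equiv.subtypeEquivRight (fun x => ?_)).trans
      ((Finset.equivOfCardEq h2).trans (Equiv.subtypeEquivRight (fun x => ?_)))
    · simp
    · simp
  refine ⟨Equiv.subtypeCongr e1 e2, ?_⟩
  have hmem : ∀ a ∈ S, Equiv.subtypeCongr e1 e2 a ∈ S' := by
    intro a ha
    have : Equiv.subtypeCongr e1 e2 a = (e1 ⟨a, ha⟩ : α) := by
      simp only [Equiv.subtypeCongr, Equiv.trans_apply]
      rw [Equiv.sumCompl_symm_apply_of_pos ha]
      simp
    rw [this]
    exact (e1 ⟨a, ha⟩).2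
  refine Finset.eq_of_subset_of_card_le ?_ ?_
  · intro a ha
    rw [Finset.mem_image] at ha
    obtain ⟨b, hb, rfl⟩ := ha
    exact hmem b hb
  · rw [Finset.card_image_of_injective _ (Equiv.injective _), h]

private lemma fib_eq (I : Finset α) (S S' : Finset α) (h : #S = #S') :
    #(Finset.univ.filter (fun π : Equiv.Perm α => I.image ⇑π = S))
      = #(Finset.univ.filter (fun π : Equiv.Perm α => I.image ⇑π = S')) := by
  obtain ⟨σ, hσ⟩ := exists_perm_image S S' h
  refine Finset.card_bij' (fun π _ => σ * π) (fun π _ => σ⁻¹ * π) ?_ ?_ ?_ ?_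
  · intro π hπ
    rw [Finset.mem_filter] at hπ ⊢
    refine ⟨Finset.mem_univ _, ?_⟩
    have : ⇑(σ * π) = ⇑σ ∘ ⇑π := rfl
    rw [this, ← Finset.image_image, hπ.2, hσ]
  · intro π hπ
    rw [Finset.mem_filter] at hπ ⊢
    refine ⟨Finset.mem_univ _, ?_⟩
    have h1 : ⇑(σ⁻¹ * π) = ⇑σ⁻¹ ∘ ⇑π := rfl
    have h2 : S'.image ⇑σ⁻¹ = S := by
      rw [← hσ, Finset.image_image]
      have : ⇑σ⁻¹ ∘ ⇑σ = id := by
        funext a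
        simp
      rw [this, Finset.image_id]
    rw [h1, ← Finset.image_image, hπ.2, h2]
  · intro π _
    simp [← mul_assoc]
  · intro π _
    simp [← mul_assoc]

private lemma transfer (I : Finset α) (Q : Finset α → Prop) [DecidablePred Q] :
    #(Finset.univ.filter (fun π : Equiv.Perm α => Q (I.image ⇑π)))
      = #((Finset.univ.powersetCard #I).filter Q)
        * #(Finset.univ.filter (fun π : Equiv.Perm α => I.image ⇑π = I)) := by
  rw [Finset.card_eq_sum_card_fiberwise (f := fun π : Equiv.Perm α => I.image ⇑π)
      (t := (Finset.univ.powersetCard #I).filter Q) ?memb]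
  case memb =>
    intro π hπ
    rw [Finset.mem_coe, Finset.mem_filter] at hπ
    rw [Finset.mem_coe, Finset.mem_filter, Finset.mem_powersetCard]
    exact ⟨⟨Finset.subset_univ _, Finset.card_image_of_injective _ (Equiv.injective π)⟩, hπ.2⟩
  have hfib : ∀ S ∈ (Finset.univ.powersetCard #I).filter Q,
      #((Finset.univ.filter (fun π : Equiv.Perm α => Q (I.image ⇑π))).filter
          (fun π : Equiv.Perm α => I.image ⇑π = S))
        = #(Finset.univ.filter (fun π : Equiv.Perm α => I.image ⇑π = I)) := by
    intro S hS
    rw [Finset.mem_filter, Finset.mem_powersetCard] at hS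
    have hQ : Q S := hS.2
    have hfil : (Finset.univ.filter (fun π : Equiv.Perm α => Q (I.image ⇑π))).filter
          (fun π : Equiv.Perm α => I.image ⇑π = S)
        = Finset.univ.filter (fun π : Equiv.Perm α => I.image ⇑π = S) := by
      rw [Finset.filter_filter]
      refine Finset.filter_congr fun π _ => ?_
      constructor
      · rintro ⟨-, h⟩; exact h
      · intro h; exact ⟨h ▸ hQ, h⟩
    rw [hfil]
    exact fib_eq I S I hS.1.2
  rw [Finset.sum_congr rfl hfib, Finset.sum_const, smul_eq_mul]

private lemma total_perm (I : Finset α) :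
    Fintype.card (Equiv.Perm α)
      = (Fintype.card α).choose #I
        * #(Finset.univ.filter (fun π : Equiv.Perm α => I.image ⇑π = I)) := by
  have := transfer (α := α) I (fun _ => True)
  rw [Finset.filter_true, Finset.filter_true, Finset.card_univ, Finset.card_powersetCard,
    Finset.card_univ] at this
  exact this
private lemma countG {γ ι₂ : Type*} [Fintype γ] [Fintype ι₂] [DecidableEq ι₂]
    (A : ι₂ → γ → Prop) [∀ j g, Decidable (A j g)] (s t : ℕ) :
    #(Finset.univ.filter (fun g : γ => s ≤ #(Finset.univ.filter (fun j : ι₂ => A j g))))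
        * s.choose t
      ≤ ∑ T ∈ (Finset.univ : Finset ι₂).powersetCard t,
          #(Finset.univ.filter (fun g : γ => ∀ j ∈ T, A j g)) := by
  have hswap : ∑ T ∈ (Finset.univ : Finset ι₂).powersetCard t,
        #(Finset.univ.filter (fun g : γ => ∀ j ∈ T, A j g))
      = ∑ g : γ, #(((Finset.univ.filter (fun j : ι₂ => A j g))).powersetCard t) := by
    simp_rw [Finset.card_filter]
    rw [Finset.sum_comm]
    refine Finset.sum_congr rfl fun g _ => ?_
    have h1 : ((Finset.univ : Finset ι₂).powersetCard t).filter
          (fun T => ∀ j ∈ T, A j g)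
        = ((Finset.univ.filter (fun j : ι₂ => A j g))).powersetCard t := by
      ext T
      simp only [Finset.mem_filter, Finset.mem_powersetCard]
      constructor
      · rintro ⟨⟨-, hT⟩, hA⟩
        exact ⟨fun j hj => Finset.mem_filter.2 ⟨Finset.mem_univ _, hA j hj⟩, hT⟩
      · rintro ⟨hsub, hT⟩
        exact ⟨⟨Finset.subset_univ _, hT⟩, fun j hj => (Finset.mem_filter.1 (hsub hj)).2⟩
    rw [← h1, Finset.card_filter]
  rw [hswap]
  calc #(Finset.univ.filter (fun g : γ => s ≤ #(Finset.univ.filter (fun j : ι₂ => A j g))))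
        * s.choose t
      = ∑ g ∈ Finset.univ.filter
          (fun g : γ => s ≤ #(Finset.univ.filter (fun j : ι₂ => A j g))), s.choose t := by
        rw [Finset.sum_const, smul_eq_mul]
    _ ≤ ∑ g ∈ Finset.univ.filter
          (fun g : γ => s ≤ #(Finset.univ.filter (fun j : ι₂ => A j g))),
          #(((Finset.univ.filter (fun j : ι₂ => A j g))).powersetCard t) := by
        refine Finset.sum_le_sum fun g hg => ?_
        rw [Finset.mem_filter] at hg
        rw [Finset.card_powersetCard]
        exact Nat.choose_le_choose t hg.2
    _ ≤ ∑ g : γ, #(((Finset.univ.filter (fun j : ι₂ => A j g))).powersetCard t) :=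
        Finset.sum_le_sum_of_subset (Finset.filter_subset _ _)

private lemma card_filter_irrel {β : Type*} {p : β → Prop} (h1 h2 : DecidablePred p)
    (s : Finset β) : #(@Finset.filter β p h1 s) = #(@Finset.filter β p h2 s) := by
  have : h1 = h2 := funext fun a => Subsingleton.elim _ _
  rw [this]

private lemma assemble {n m : ℕ} (I : Finset (Fin n)) (B : Fin m → Finset (Fin n) → Prop)
    [∀ j S, Decidable (B j S)] (t s : ℕ) (j0 : Fin m)
    (hset : ∀ T ∈ ((Finset.univ : Finset (Fin m)).powersetCard t),
      #((Finset.univ.powersetCard #I).filter (fun S : Finset (Fin n) => ∀ j ∈ T, B j S))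
          * ((Fintype.card (Fin n)).choose #I) ^ t
        ≤ (Fintype.card (Fin n)).choose #I
          * (#((Finset.univ.powersetCard #I).filter
              (fun S : Finset (Fin n) => ∀ j ∈ ({j0} : Finset (Fin m)), B j S))) ^ t) :
    (#(Finset.univ.filter (fun π : Equiv.Perm (Fin n) =>
          s ≤ #(Finset.univ.filter (fun j : Fin m => B j (I.image ⇑π))))) : ℝ)
        / (Fintype.card (Equiv.Perm (Fin n)) : ℝ) * (s.choose t)
      ≤ (m.choose t) * ((#(Finset.univ.filter (fun π : Equiv.Perm (Fin n) =>
            B j0 (I.image ⇑π))) : ℝ)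
        / (Fintype.card (Equiv.Perm (Fin n)) : ℝ)) ^ t := by
  set D : ℕ := Fintype.card (Equiv.Perm (Fin n)) with hDdef
  set φ : ℕ := #(Finset.univ.filter (fun π : Equiv.Perm (Fin n) => I.image ⇑π = I)) with hφ
  set Cn : ℕ := (Fintype.card (Fin n)).choose #I with hCn
  have htot : D = Cn * φ := total_perm I
  set A : ℕ := #(Finset.univ.filter (fun π : Equiv.Perm (Fin n) =>
      s ≤ #(Finset.univ.filter (fun j : Fin m => B j (I.image ⇑π))))) with hA
  set P0 : ℕ := #(Finset.univ.filter (fun π : Equiv.Perm (Fin n) =>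
      B j0 (I.image ⇑π))) with hP0
  set N0 : ℕ := #((Finset.univ.powersetCard #I).filter
      (fun S : Finset (Fin n) => ∀ j ∈ ({j0} : Finset (Fin m)), B j S)) with hN0
  have hP0N0 : P0 = N0 * φ := by
    rw [hP0, hN0]
    have h1 : ((Finset.univ.powersetCard #I).filter
          (fun S : Finset (Fin n) => ∀ j ∈ ({j0} : Finset (Fin m)), B j S))
        = ((Finset.univ.powersetCard #I).filter (fun S : Finset (Fin n) => B j0 S)) := by
      refine Finset.filter_congr fun S _ => ?_
      simp
    rw [h1]
    exact transfer I (fun S : Finset (Fin n) => B j0 S)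
  -- step 1 : counting over t-subsets
  have step1 : A * s.choose t
      ≤ ∑ T ∈ ((Finset.univ : Finset (Fin m)).powersetCard t),
          #(Finset.univ.filter (fun π : Equiv.Perm (Fin n) => ∀ j ∈ T, B j (I.image ⇑π))) := by
    refine (countG (fun j (g : Equiv.Perm (Fin n)) => B j (I.image ⇑g)) s t).trans
      (le_of_eq (Finset.sum_congr rfl fun T _ => ?_))
    exact card_filter_irrel _ _ _
  -- step 2 : per-subset bound
  have step2 : ∀ T ∈ ((Finset.univ : Finset (Fin m)).powersetCard t),
      #(Finset.univ.filter (fun π : Equiv.Perm (Fin n) => ∀ j ∈ T, B j (I.image ⇑π))) * D ^ t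
        ≤ D * P0 ^ t := by
    intro T hT
    have htr : #(Finset.univ.filter (fun π : Equiv.Perm (Fin n) => ∀ j ∈ T, B j (I.image ⇑π)))
        = #((Finset.univ.powersetCard #I).filter
            (fun S : Finset (Fin n) => ∀ j ∈ T, B j S)) * φ :=
      transfer I (fun S : Finset (Fin n) => ∀ j ∈ T, B j S)
    set NT : ℕ := #((Finset.univ.powersetCard #I).filter
        (fun S : Finset (Fin n) => ∀ j ∈ T, B j S)) with hNT
    have hs := hset T hT
    calc #(Finset.univ.filter (fun π : Equiv.Perm (Fin n) => ∀ j ∈ T, B j (I.image ⇑π))) * D ^ t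
        = (NT * φ) * (Cn * φ) ^ t := by rw [htr, htot]
      _ = (NT * Cn ^ t) * (φ * φ ^ t) := by ring
      _ ≤ (Cn * N0 ^ t) * (φ * φ ^ t) := Nat.mul_le_mul_right _ hs
      _ = (Cn * φ) * (N0 * φ) ^ t := by ring
      _ = D * P0 ^ t := by rw [← htot, ← hP0N0]
  have step3 : A * s.choose t * D ^ t ≤ m.choose t * (D * P0 ^ t) := by
    calc A * s.choose t * D ^ t
        ≤ (∑ T ∈ ((Finset.univ : Finset (Fin m)).powersetCard t),
            #(Finset.univ.filter
              (fun π : Equiv.Perm (Fin n) => ∀ j ∈ T, B j (I.image ⇑π)))) * D ^ t :=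
          Nat.mul_le_mul_right _ step1
      _ = ∑ T ∈ ((Finset.univ : Finset (Fin m)).powersetCard t),
            #(Finset.univ.filter
              (fun π : Equiv.Perm (Fin n) => ∀ j ∈ T, B j (I.image ⇑π))) * D ^ t :=
          Finset.sum_mul _ _ _
      _ ≤ ∑ T ∈ ((Finset.univ : Finset (Fin m)).powersetCard t), D * P0 ^ t :=
          Finset.sum_le_sum step2
      _ = m.choose t * (D * P0 ^ t) := by
          rw [Finset.sum_const, smul_eq_mul, Finset.card_powersetCard, Finset.card_univ,
            Fintype.card_fin]
  -- pass to the reals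
  have hD0 : (0 : ℝ) < (D : ℝ) := by
    exact_mod_cast Fintype.card_pos
  rw [div_pow, div_mul_eq_mul_div, ← mul_div_assoc, div_le_div_iff₀ hD0 (pow_pos hD0 t)]
  have : ((A * s.choose t * D ^ t : ℕ) : ℝ) ≤ ((m.choose t * (D * P0 ^ t) : ℕ) : ℝ) := by
    exact_mod_cast step3
  push_cast at this
  linarith
private lemma card_filter_iff {β : Type*} (s : Finset β) {p q : β → Prop}
    (h1 : DecidablePred p) (h2 : DecidablePred q) (h : ∀ b ∈ s, p b ↔ q b) :
    #(@Finset.filter β p h1 s) = #(@Finset.filter β q h2 s) := by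
  exact congrArg Finset.card (Finset.filter_congr h)

private lemma hset_gt {n m k : ℕ} (Δ : Fin m → Finset (Fin n))
    (hdisj : Pairwise fun i j : Fin m => Disjoint (Δ i) (Δ j))
    (hcard : ∀ j : Fin m, (Δ j).card = k)
    (I : Finset (Fin n)) (c : ℝ) (t : ℕ) (j0 : Fin m) :
    ∀ T ∈ ((Finset.univ : Finset (Fin m)).powersetCard t),
      #((Finset.univ.powersetCard #I).filter
          (fun S : Finset (Fin n) => ∀ j ∈ T, (#(S ∩ Δ j) : ℝ) > c))
          * ((Fintype.card (Fin n)).choose #I) ^ t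
        ≤ (Fintype.card (Fin n)).choose #I
          * (#((Finset.univ.powersetCard #I).filter
              (fun S : Finset (Fin n) => ∀ j ∈ ({j0} : Finset (Fin m)), (#(S ∩ Δ j) : ℝ) > c))) ^ t := by
  intro T hT
  rw [Finset.mem_powersetCard] at hT
  have hcnt : ∀ (T' : Finset (Fin m)),
      #((Finset.univ.powersetCard #I).filter
          (fun S : Finset (Fin n) => ∀ j ∈ T', (#(S ∩ Δ j) : ℝ) > c))
        = cntA #I T' Δ c := by
    intro T'
    unfold cntA
    exact card_filter_iff _ _ _ (fun S _ => by simp [gt_iff_lt])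
  rw [hcnt T, hcnt ({j0} : Finset (Fin m))]
  have hsingle : ∀ j : Fin m, cntA #I ({j} : Finset (Fin m)) Δ c
      = cntA #I ({j0} : Finset (Fin m)) Δ c := by
    intro j
    rw [cntA_single, cntA_single, hcard j, hcard j0]
  calc cntA #I T Δ c * ((Fintype.card (Fin n)).choose #I) ^ t
      = cntA #I T Δ c * ((Fintype.card (Fin n)).choose #I) ^ T.card := by rw [hT.2]
    _ ≤ (Fintype.card (Fin n)).choose #I * ∏ j ∈ T, cntA #I ({j} : Finset (Fin m)) Δ c :=
        main_sets #I Δ c T (fun i _ j hj hne => hdisj hne)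
    _ = (Fintype.card (Fin n)).choose #I * ∏ j ∈ T, cntA #I ({j0} : Finset (Fin m)) Δ c := by
        rw [Finset.prod_congr rfl fun j _ => hsingle j]
    _ = (Fintype.card (Fin n)).choose #I * (cntA #I ({j0} : Finset (Fin m)) Δ c) ^ t := by
        rw [Finset.prod_const, hT.2]

private lemma hset_lt {n m k : ℕ} (Δ : Fin m → Finset (Fin n))
    (hdisj : Pairwise fun i j : Fin m => Disjoint (Δ i) (Δ j))
    (hcard : ∀ j : Fin m, (Δ j).card = k)
    (I : Finset (Fin n)) (b : ℝ) (t : ℕ) (j0 : Fin m) :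
    ∀ T ∈ ((Finset.univ : Finset (Fin m)).powersetCard t),
      #((Finset.univ.powersetCard #I).filter
          (fun S : Finset (Fin n) => ∀ j ∈ T, (#(S ∩ Δ j) : ℝ) < b))
          * ((Fintype.card (Fin n)).choose #I) ^ t
        ≤ (Fintype.card (Fin n)).choose #I
          * (#((Finset.univ.powersetCard #I).filter
              (fun S : Finset (Fin n) => ∀ j ∈ ({j0} : Finset (Fin m)), (#(S ∩ Δ j) : ℝ) < b))) ^ t := by
  intro T hT
  rw [Finset.mem_powersetCard] at hT
  have hr : #I ≤ Fintype.card (Fin n) := Finset.card_le_univ I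
  have hcnt : ∀ (T' : Finset (Fin m)), (∀ j ∈ T', #(Δ j) = k) →
      #((Finset.univ.powersetCard #I).filter
          (fun S : Finset (Fin n) => ∀ j ∈ T', (#(S ∩ Δ j) : ℝ) < b))
        = cntA (Fintype.card (Fin n) - #I) T' Δ ((k : ℝ) - b) :=
    fun T' hc => (card_filter_irrel _ _ _).trans (cnt_compl #I T' Δ k b hc hr)
  rw [hcnt T (fun j _ => hcard j), hcnt ({j0} : Finset (Fin m)) (fun j _ => hcard j)]
  have hsym : (Fintype.card (Fin n)).choose (Fintype.card (Fin n) - #I)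
      = (Fintype.card (Fin n)).choose #I := Nat.choose_symm hr
  have hsingle : ∀ j : Fin m,
      cntA (Fintype.card (Fin n) - #I) ({j} : Finset (Fin m)) Δ ((k : ℝ) - b)
        = cntA (Fintype.card (Fin n) - #I) ({j0} : Finset (Fin m)) Δ ((k : ℝ) - b) := by
    intro j
    rw [cntA_single, cntA_single, hcard j, hcard j0]
  calc cntA (Fintype.card (Fin n) - #I) T Δ ((k : ℝ) - b)
        * ((Fintype.card (Fin n)).choose #I) ^ t
      = cntA (Fintype.card (Fin n) - #I) T Δ ((k : ℝ) - b)
        * ((Fintype.card (Fin n)).choose (Fintype.card (Fin n) - #I)) ^ T.card := by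
        rw [hsym, hT.2]
    _ ≤ (Fintype.card (Fin n)).choose (Fintype.card (Fin n) - #I)
        * ∏ j ∈ T, cntA (Fintype.card (Fin n) - #I) ({j} : Finset (Fin m)) Δ ((k : ℝ) - b) :=
        main_sets _ Δ _ T (fun i _ j hj hne => hdisj hne)
    _ = (Fintype.card (Fin n)).choose #I
        * (cntA (Fintype.card (Fin n) - #I) ({j0} : Finset (Fin m)) Δ ((k : ℝ) - b)) ^ t := by
        rw [Finset.prod_congr rfl fun j _ => hsingle j, Finset.prod_const, hT.2, hsym]

/-- Quantitative form of Lemma 1(b) for uniform permutations: if `{1,…,n}` is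
partitioned into `m` blocks of size `k`, and `μ` is the probability that a
single block contains abnormally many `π`-images of `I`, then for `1 ≤ t ≤ s ≤ m`
the probability that at least `s` blocks are abnormal, times `C(s,t)`, is at
most `C(m,t)·μ^t`; and likewise for abnormally few images. -/
theorem stmt15 (n m k : ℕ) (hk : 1 ≤ k) (hn : n = m * k)
    (Δ : Fin m → Finset (Fin n))
    (hdisj : Pairwise fun i j : Fin m => Disjoint (Δ i) (Δ j))
    (hcard : ∀ j : Fin m, (Δ j).card = k)
    (hcover : ∀ x : Fin n, ∃ j : Fin m, x ∈ Δ j)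
    (I : Finset (Fin n)) (δ : ℝ) (hδ : 0 < δ)
    (t s : ℕ) (ht : 1 ≤ t) (hts : t ≤ s) (hsm : s ≤ m) :
    ((((Finset.univ.filter (fun π : Equiv.Perm (Fin n) =>
          s ≤ (Finset.univ.filter (fun j : Fin m =>
            ((I.image (fun x => π x) ∩ Δ j).card : ℝ)
              > ((I.card : ℝ) / n + δ) * k)).card)).card : ℝ)
        / (Fintype.card (Equiv.Perm (Fin n)) : ℝ)) * (s.choose t)
      ≤ (m.choose t) *
        (((Finset.univ.filter (fun π : Equiv.Perm (Fin n) =>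
            ((I.image (fun x => π x) ∩ Δ ⟨0, by omega⟩).card : ℝ)
              > ((I.card : ℝ) / n + δ) * k)).card : ℝ)
          / (Fintype.card (Equiv.Perm (Fin n)) : ℝ)) ^ t) ∧
    ((((Finset.univ.filter (fun π : Equiv.Perm (Fin n) =>
          s ≤ (Finset.univ.filter (fun j : Fin m =>
            ((I.image (fun x => π x) ∩ Δ j).card : ℝ)
              < ((I.card : ℝ) / n - δ) * k)).card)).card : ℝ)
        / (Fintype.card (Equiv.Perm (Fin n)) : ℝ)) * (s.choose t)
      ≤ (m.choose t) *
        (((Finset.univ.filter (fun π : Equiv.Perm (Fin n) =>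
            ((I.image (fun x => π x) ∩ Δ ⟨0, by omega⟩).card : ℝ)
              < ((I.card : ℝ) / n - δ) * k)).card : ℝ)
          / (Fintype.card (Equiv.Perm (Fin n)) : ℝ)) ^ t) := by
  constructor
  · exact assemble I (fun (j : Fin m) (S : Finset (Fin n)) =>
      ((#(S ∩ Δ j) : ℝ) > ((I.card : ℝ) / n + δ) * k)) t s ⟨0, by omega⟩
      (hset_gt Δ hdisj hcard I _ t _)
  · exact assemble I (fun (j : Fin m) (S : Finset (Fin n)) =>
      ((#(S ∩ Δ j) : ℝ) < ((I.card : ℝ) / n - δ) * k)) t s ⟨0, by omega⟩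
      (hset_lt Δ hdisj hcard I _ t _)
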